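/- (q-Diophantine zeros of the Askey–Wilson polynomial.) Let n, m, j ∈ ℕ with 1 ≤ j ≤ m ≤ n, and let q, t1, t2, t4 ∈ ℂ with q ≠ 0, t1 ≠ 0, t2 ≠ 0, t4 ≠ 0. Set t3 = q^{1−m}/t4 and u_j = t4 q^{j−1}. Assume (q;q)_k ≠ 0, (t1t2;q)_k ≠ 0, (t1t4;q)_k ≠ 0, and (q^{1−m}t1/t4;q)_k ≠ 0 for all k ≤ n, with additionally (t1t2;q)_{n−m} ≠ 0, and assume (t2 q/t4;q)_k ≠ 0 and (q^m t2t4;q)_k ≠ 0 for all k ≤ n−m. Then p_n(u_j; t1, t2, q^{1−m}/t4, t4 | q) = 0; that is, in the variable x = (u+1/u)/2, the Askey–Wilson polynomial vanishes at the m explicit points x_j = (t4 q^{j−1} + t4^{−1} q^{1−j})/2, j = 1, …, m. -/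

import Mathlib

open Finset

/-- q-shifted factorial `(a;q)_k = ∏_{j=0}^{k-1} (1 - a q^j)`. -/
noncomputable def qpoch (a q : ℂ) (k : ℕ) : ℂ := ∏ i ∈ Finset.range k, (1 - a * q ^ i)

lemma qpoch_zero (a q : ℂ) : qpoch a q 0 = 1 := by simp [qpoch]

lemma qpoch_succ (a q : ℂ) (k : ℕ) : qpoch a q (k+1) = qpoch a q k * (1 - a * q ^ k) := by
  simp [qpoch, Finset.prod_range_succ]

lemma qpoch_succ' (a q : ℂ) (k : ℕ) : qpoch a q (k+1) = (1 - a) * qpoch (a*q) q k := by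
  simp only [qpoch, Finset.prod_range_succ', pow_zero, mul_one]
  rw [mul_comm]
  congr 1
  exact Finset.prod_congr rfl (fun i _ => by rw [pow_succ]; ring)

lemma qpoch_add (a q : ℂ) (s k : ℕ) : qpoch a q (s+k) = qpoch a q s * qpoch (a * q ^ s) q k := by
  simp only [qpoch, Finset.prod_range_add]
  congr 1
  exact Finset.prod_congr rfl (fun i _ => by rw [pow_add]; ring)

lemma qpoch_shift (a q : ℂ) (s k : ℕ) :
    qpoch (a * q ^ s) q k * qpoch a q s = qpoch (a * q ^ k) q s * qpoch a q k := by
  rw [mul_comm (qpoch (a * q ^ s) q k), ← qpoch_add, mul_comm (qpoch (a * q ^ k) q s),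
    ← qpoch_add, add_comm]

lemma qpoch_eq_zero (a q : ℂ) (n i : ℕ) (hi : i < n) (h : a * q ^ i = 1) : qpoch a q n = 0 :=
  Finset.prod_eq_zero (Finset.mem_range.mpr hi) (by rw [h]; ring)

lemma qbt (q : ℂ) (hq : q ≠ 0) : ∀ (n : ℕ), (∀ k ≤ n, qpoch q q k ≠ 0) → ∀ z : ℂ,
    ∑ k ∈ Finset.range (n+1), qpoch (q ^ (-(n:ℤ))) q k * z ^ k / qpoch q q k
      = qpoch (q ^ (-(n:ℤ)) * z) q n := by
  intro n
  induction n with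
  | zero => intro _ z; simp [qpoch_zero]
  | succ n ih =>
    intro h z
    obtain ⟨w, rfl⟩ : ∃ w, z = q * w := ⟨z/q, by field_simp⟩
    have hBq : q ^ (-((n:ℕ)+1:ℕ):ℤ) * q = q ^ (-(n:ℤ)) := by
      rw [← zpow_add_one₀ hq]
      congr 1
      push_cast
      ring
    have key : ∀ k ∈ Finset.range (n+1),
        qpoch (q ^ (-((n:ℕ)+1:ℕ):ℤ)) q (k+1) * (q*w) ^ (k+1) / qpoch q q (k+1)
        = qpoch (q ^ (-(n:ℤ))) q (k+1) * w ^ (k+1) / qpoch q q (k+1)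
          - w * (qpoch (q ^ (-(n:ℤ))) q k * w ^ k / qpoch q q k) := by
      intro k hk
      rw [Finset.mem_range] at hk
      have hY : qpoch q q k ≠ 0 := h k (by omega)
      have hY1 : qpoch q q (k+1) ≠ 0 := h (k+1) (by omega)
      have hg : (1 : ℂ) - q * q ^ k ≠ 0 := by
        intro hzero
        apply hY1
        rw [qpoch_succ, hzero, mul_zero]
      rw [qpoch_succ' (q ^ (-((n:ℕ)+1:ℕ):ℤ)), hBq,
        qpoch_succ (q ^ (-(n:ℤ))), qpoch_succ q,
        show q ^ (-(n:ℤ)) = q ^ (-((n:ℕ)+1:ℕ):ℤ) * q from hBq.symm]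
      generalize q ^ (-((n:ℕ)+1:ℕ):ℤ) = B
      field_simp [hY, hg]
      ring
    rw [Finset.sum_range_succ' _ (n+1)]
    rw [Finset.sum_congr rfl key, Finset.sum_sub_distrib, ← Finset.mul_sum]
    have hs1 : ∑ k ∈ Finset.range (n+1), qpoch (q ^ (-(n:ℤ))) q (k+1) * w ^ (k+1) / qpoch q q (k+1)
        = ∑ k ∈ Finset.range (n+1), qpoch (q ^ (-(n:ℤ))) q k * w ^ k / qpoch q q k - 1 := by
      have h0 : qpoch (q ^ (-(n:ℤ))) q (n+1) = 0 := by
        apply qpoch_eq_zero _ _ _ n (by omega)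
        rw [← zpow_natCast q n, ← zpow_add₀ hq]
        simp
      have e1 := Finset.sum_range_succ'
        (fun k => qpoch (q ^ (-(n:ℤ))) q k * w ^ k / qpoch q q k) (n+1)
      rw [Finset.sum_range_succ] at e1
      simp only [h0] at e1
      simp only [qpoch_zero, pow_zero, zero_mul, zero_div, add_zero, mul_one, one_div,
        inv_one] at e1
      linear_combination -e1
    rw [hs1, ih (fun k hk => h k (by omega)) w]
    have harg : q ^ (-((n:ℕ)+1:ℕ):ℤ) * (q * w) = q ^ (-(n:ℤ)) * w := by
      rw [← mul_assoc, hBq]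
    have hinv : q ^ (-(n:ℤ)) * q ^ (n:ℕ) = 1 := by
      rw [← zpow_natCast q n, ← zpow_add₀ hq]
      simp
    have harg3 : q ^ (-(n:ℤ)) * w * q ^ n = w := by
      linear_combination w * hinv
    rw [qpoch_succ, harg, harg3]
    simp [qpoch_zero]
    ring

lemma polyzero (q : ℂ) (hq : q ≠ 0) (n : ℕ) (h : ∀ k ≤ n, qpoch q q k ≠ 0)
    (P : Polynomial ℂ) (hP : P.natDegree < n) :
    ∑ k ∈ Finset.range (n+1),
      qpoch (q ^ (-(n:ℤ))) q k * q ^ k * Polynomial.eval (q ^ k) P / qpoch q q k = 0 := by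
  have hterm : ∀ k ∈ Finset.range (n+1),
      qpoch (q ^ (-(n:ℤ))) q k * q ^ k * Polynomial.eval (q ^ k) P / qpoch q q k
      = ∑ s ∈ Finset.range n,
          P.coeff s * (qpoch (q ^ (-(n:ℤ))) q k * (q ^ (s+1)) ^ k / qpoch q q k) := by
    intro k hk
    rw [Polynomial.eval_eq_sum_range' hP (q ^ k), Finset.mul_sum, Finset.sum_div]
    refine Finset.sum_congr rfl (fun s hs => ?_)
    have hpow : (q ^ (s+1)) ^ k = (q ^ k) ^ s * q ^ k := by
      rw [← pow_mul, ← pow_mul, ← pow_add]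
      congr 1
      ring
    rw [hpow]
    ring
  rw [Finset.sum_congr rfl hterm, Finset.sum_comm]
  refine Finset.sum_eq_zero (fun s hs => ?_)
  rw [Finset.mem_range] at hs
  rw [← Finset.mul_sum, qbt q hq n h (q ^ (s+1))]
  have hz : qpoch (q ^ (-(n:ℤ)) * q ^ (s+1)) q n = 0 := by
    apply qpoch_eq_zero _ _ _ (n-1-s) (by omega)
    rw [← zpow_natCast q (s+1), ← zpow_natCast q (n-1-s), ← zpow_add₀ hq, ← zpow_add₀ hq]
    rw [show (-(n:ℤ)) + ((s+1:ℕ):ℤ) + ((n-1-s:ℕ):ℤ) = 0 by push_cast; omega, zpow_zero]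
  rw [hz, mul_zero]

/-- The Askey–Wilson polynomial `p_n(u; t1,t2,t3,t4 | q)` in the variable `u`
(`u` plays the role of `e^{iθ}`, so `x = (u + 1/u)/2 = cos θ`). -/
noncomputable def askeyWilson (q : ℂ) (n : ℕ) (u t1 t2 t3 t4 : ℂ) : ℂ :=
  t1 ^ (-(n : ℤ)) * qpoch (t1 * t2) q n * qpoch (t1 * t3) q n * qpoch (t1 * t4) q n *
    ∑ k ∈ Finset.range (n + 1),
      (qpoch (q ^ (-(n : ℤ))) q k * qpoch (t1 * t2 * t3 * t4 * q ^ ((n : ℤ) - 1)) q k *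
        qpoch (t1 * u) q k * qpoch (t1 / u) q k * q ^ k) /
      (qpoch q q k * qpoch (t1 * t2) q k * qpoch (t1 * t3) q k * qpoch (t1 * t4) q k)

theorem askey_wilson_q_diophantine_zeros (n m j : ℕ) (hj : 1 ≤ j) (hjm : j ≤ m) (hmn : m ≤ n)
    (q t1 t2 t4 : ℂ)
    (hq : q ≠ 0) (ht1 : t1 ≠ 0) (ht2 : t2 ≠ 0) (ht4 : t4 ≠ 0)
    (hqq : ∀ k : ℕ, k ≤ n → qpoch q q k ≠ 0)
    (h12 : ∀ k : ℕ, k ≤ n → qpoch (t1 * t2) q k ≠ 0)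
    (h14 : ∀ k : ℕ, k ≤ n → qpoch (t1 * t4) q k ≠ 0)
    (h13 : ∀ k : ℕ, k ≤ n → qpoch (q ^ (1 - (m : ℤ)) * t1 / t4) q k ≠ 0)
    (h12' : qpoch (t1 * t2) q (n - m) ≠ 0)
    (h23 : ∀ k : ℕ, k ≤ n - m → qpoch (t2 * q / t4) q k ≠ 0)
    (h24 : ∀ k : ℕ, k ≤ n - m → qpoch (q ^ m * t2 * t4) q k ≠ 0) :
    askeyWilson q n (t4 * q ^ (j - 1)) t1 t2 (q ^ (1 - (m : ℤ)) / t4) t4 = 0 := by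
  unfold askeyWilson
  apply mul_eq_zero_of_right
  have hj1 : j - 1 ≤ n := by omega
  have hmj : m - j ≤ n := by omega
  set γ : ℂ := q ^ (1 - (m:ℤ)) * t1 / t4 with hγ
  have hCβ : qpoch (t1*t4) q (j-1) ≠ 0 := h14 _ hj1
  have hCγ : qpoch γ q (m-j) ≠ 0 := h13 _ hmj
  set C : ℂ := qpoch (t1*t2) q (n-m) * (qpoch (t1*t4) q (j-1) * qpoch γ q (m-j)) with hC
  have hCne : C ≠ 0 := mul_ne_zero h12' (mul_ne_zero hCβ hCγ)
  set P : Polynomial ℂ :=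
    (∏ i ∈ Finset.range (n-m), (1 - Polynomial.C ((t1*t2) * q^i) * Polynomial.X)) *
    ((∏ i ∈ Finset.range (j-1), (1 - Polynomial.C ((t1*t4) * q^i) * Polynomial.X)) *
     (∏ i ∈ Finset.range (m-j), (1 - Polynomial.C (γ * q^i) * Polynomial.X))) with hP
  have heval : ∀ x : ℂ, Polynomial.eval x P
      = qpoch ((t1*t2)*x) q (n-m) *
        (qpoch ((t1*t4)*x) q (j-1) * qpoch (γ*x) q (m-j)) := by
    intro x
    simp only [hP, Polynomial.eval_mul, Polynomial.eval_prod, Polynomial.eval_sub,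
      Polynomial.eval_one, Polynomial.eval_C, Polynomial.eval_X]
    unfold qpoch
    congr 1
    · exact Finset.prod_congr rfl (fun i _ => by ring)
    · congr 1
      · exact Finset.prod_congr rfl (fun i _ => by ring)
      · exact Finset.prod_congr rfl (fun i _ => by ring)
  have hfac : ∀ a : ℂ, (1 - Polynomial.C a * Polynomial.X).natDegree ≤ 1 := fun a =>
    (Polynomial.natDegree_sub_le _ _).trans
      (max_le (by simp) ((Polynomial.natDegree_C_mul_le _ _).trans Polynomial.natDegree_X_le))
  have hprodle : ∀ (s : ℕ) (c : ℕ → ℂ),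
      (∏ i ∈ Finset.range s, (1 - Polynomial.C (c i) * Polynomial.X)).natDegree ≤ s := by
    intro s c
    refine le_trans (Polynomial.natDegree_prod_le _ _) ?_
    refine le_trans (Finset.sum_le_sum (fun i _ => hfac (c i))) ?_
    simp
  have hdeg : P.natDegree < n := by
    have h1 := Polynomial.natDegree_mul_le (p :=
      (∏ i ∈ Finset.range (n-m), (1 - Polynomial.C ((t1*t2) * q^i) * Polynomial.X))) (q :=
      ((∏ i ∈ Finset.range (j-1), (1 - Polynomial.C ((t1*t4) * q^i) * Polynomial.X)) *
       (∏ i ∈ Finset.range (m-j), (1 - Polynomial.C (γ * q^i) * Polynomial.X))))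
    have h2 := Polynomial.natDegree_mul_le (p :=
      (∏ i ∈ Finset.range (j-1), (1 - Polynomial.C ((t1*t4) * q^i) * Polynomial.X))) (q :=
      (∏ i ∈ Finset.range (m-j), (1 - Polynomial.C (γ * q^i) * Polynomial.X)))
    have g1 : (∏ i ∈ Finset.range (n-m),
        (1 - Polynomial.C ((t1*t2) * q^i) * Polynomial.X)).natDegree ≤ n-m := hprodle _ _
    have g2 : (∏ i ∈ Finset.range (j-1),
        (1 - Polynomial.C ((t1*t4) * q^i) * Polynomial.X)).natDegree ≤ j-1 := hprodle _ _
    have g3 : (∏ i ∈ Finset.range (m-j),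
        (1 - Polynomial.C (γ * q^i) * Polynomial.X)).natDegree ≤ m-j := hprodle _ _
    rw [hP]
    omega
  have e1 : t1 * t2 * (q ^ (1 - (m:ℤ)) / t4) * t4 * q ^ ((n:ℤ) - 1) = (t1*t2) * q ^ (n - m) := by
    have hx : q ^ (1-(m:ℤ)) * q ^ ((n:ℤ)-1) = q ^ ((n-m : ℕ)) := by
      rw [← zpow_natCast q (n-m), ← zpow_add₀ hq]
      congr 1
      push_cast
      omega
    field_simp
    linear_combination hx
  have e3 : t1 / (t4 * q ^ (j - 1)) = γ * q ^ (m - j) := by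
    have hx3 : q ^ (1-(m:ℤ)) * q ^ ((m-j:ℕ)) * q ^ ((j-1:ℕ)) = 1 := by
      rw [← zpow_natCast q (m-j), ← zpow_natCast q (j-1), ← zpow_add₀ hq, ← zpow_add₀ hq,
        show (1-(m:ℤ)) + ((m-j:ℕ):ℤ) + ((j-1:ℕ):ℤ) = 0 by push_cast; omega, zpow_zero]
    rw [hγ, div_eq_iff (mul_ne_zero ht4 (pow_ne_zero _ hq))]
    field_simp
    linear_combination (-1) * hx3
  have hterm : ∀ k ∈ Finset.range (n+1),
      (qpoch (q ^ (-(n : ℤ))) q k *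
        qpoch (t1 * t2 * (q ^ (1 - (m:ℤ)) / t4) * t4 * q ^ ((n : ℤ) - 1)) q k *
        qpoch (t1 * (t4 * q ^ (j - 1))) q k * qpoch (t1 / (t4 * q ^ (j - 1))) q k * q ^ k) /
      (qpoch q q k * qpoch (t1 * t2) q k * qpoch (t1 * (q ^ (1 - (m:ℤ)) / t4)) q k *
        qpoch (t1 * t4) q k)
      = (qpoch (q ^ (-(n:ℤ))) q k * q ^ k * Polynomial.eval (q ^ k) P / qpoch q q k) / C := by
    intro k hk
    rw [Finset.mem_range] at hk
    have hk' : k ≤ n := by omega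
    have hY : qpoch q q k ≠ 0 := hqq k hk'
    have hB1 : qpoch (t1*t2) q k ≠ 0 := h12 k hk'
    have hB2 : qpoch γ q k ≠ 0 := h13 k hk'
    have hB3 : qpoch (t1*t4) q k ≠ 0 := h14 k hk'
    rw [e1, show t1 * (t4 * q ^ (j - 1)) = (t1*t4) * q ^ (j-1) from by ring, e3,
      show t1 * (q ^ (1-(m:ℤ)) / t4) = γ from by rw [hγ]; ring, heval (q^k), div_div,
      div_eq_div_iff (mul_ne_zero (mul_ne_zero (mul_ne_zero hY hB1) hB2) hB3)
        (mul_ne_zero hY hCne)]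
    have k1 := qpoch_shift (t1*t2) q (n-m) k
    have k2 := qpoch_shift (t1*t4) q (j-1) k
    have k3 := qpoch_shift γ q (m-j) k
    have kk : (qpoch ((t1*t2)*q^(n-m)) q k * qpoch (t1*t2) q (n-m)) *
        ((qpoch ((t1*t4)*q^(j-1)) q k * qpoch (t1*t4) q (j-1)) *
         (qpoch (γ*q^(m-j)) q k * qpoch γ q (m-j)))
        = (qpoch ((t1*t2)*q^k) q (n-m) * qpoch (t1*t2) q k) *
          ((qpoch ((t1*t4)*q^k) q (j-1) * qpoch (t1*t4) q k) *
           (qpoch (γ*q^k) q (m-j) * qpoch γ q k)) := by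
      rw [k1, k2, k3]
    rw [hC]
    linear_combination (qpoch (q ^ (-(n:ℤ))) q k * q ^ k * qpoch q q k) * kk
  rw [Finset.sum_congr rfl hterm, ← Finset.sum_div, polyzero q hq n hqq P hdeg, zero_div]
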